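/- For natural numbers n and r with r ≤ n, the polynomial g_n^{(r)}(x) = Σ_{k=r}^n C(n,k) L(k,r) L_{n−k}(x) has only real zeros, where L(k,r) are the Lah numbers and L_m(x) the Lah polynomials; moreover Σ_{n≥0} g_n^{(r)}(x) t^n/n! = (1/r!)(t/(1−t))^r exp(xt/(1−t)). -/

import Mathlib

/-- A real polynomial has only real zeros: every complex root has imaginary part zero. -/
def RZ (p : Polynomial ℝ) : Prop :=
  ∀ z : ℂ, (p.map (algebraMap ℝ ℂ)).IsRoot z → z.im = 0

/-- The Lah number `L(n,k) = (n!/k!) C(n−1,k−1)`. -/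
def lahNum : ℕ → ℕ → ℕ
  | 0, 0 => 1
  | 0, _ + 1 => 0
  | _ + 1, 0 => 0
  | n + 1, k + 1 => ((n + 1).factorial / (k + 1).factorial) * n.choose k

/-- The Lah polynomial `L_m(x) = ∑_j L(m,j) x^j`. -/
noncomputable def lahPoly (m : ℕ) : Polynomial ℝ :=
  ∑ j ∈ Finset.range (m + 1), Polynomial.C (lahNum m j : ℝ) * Polynomial.X ^ j

/-- `g_n^{(r)}(x) = ∑_{k=r}^n C(n,k) L(k,r) L_{n−k}(x)`. -/
noncomputable def gPoly (n r : ℕ) : Polynomial ℝ :=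
  ∑ k ∈ Finset.Icc r n,
    Polynomial.C ((n.choose k : ℝ) * (lahNum k r : ℝ)) * lahPoly (n - k)

/-- The formal power series `t/(1−t) = ∑_{j ≥ 1} t^j`. -/
noncomputable def tDivOneSubT : PowerSeries ℝ :=
  PowerSeries.mk fun j => if j = 0 then 0 else 1

open Polynomial Finset
section NatLemmas

lemma lahNum_succ_succ (n k : ℕ) :
    lahNum (n+1) (k+1) = ((n + 1).factorial / (k + 1).factorial) * n.choose k := rfl

lemma lah_clear (n k : ℕ) :
    (k+1).factorial * lahNum (n+1) (k+1) = (n+1).factorial * n.choose k := by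
  rcases le_or_gt k n with h | h
  · rw [lahNum_succ_succ, ← Nat.mul_assoc,
      Nat.mul_div_cancel' (Nat.factorial_dvd_factorial (by omega))]
  · rw [lahNum_succ_succ, Nat.choose_eq_zero_of_lt h, Nat.mul_zero, Nat.mul_zero, Nat.mul_zero]

lemma lahNum_eq_zero : ∀ {n k : ℕ}, n < k → lahNum n k = 0
  | 0, _ + 1, _ => rfl
  | n + 1, k + 1, h => by
    rw [lahNum_succ_succ, Nat.choose_eq_zero_of_lt (by omega), Nat.mul_zero]

lemma lahNum_self (n : ℕ) : lahNum n n = 1 := by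
  cases n with
  | zero => rfl
  | succ m =>
    rw [lahNum_succ_succ, Nat.div_self (Nat.factorial_pos _), Nat.choose_self]

lemma lah_rec (n k : ℕ) :
    lahNum (n+1) (k+1) = lahNum n k + (n+k+1) * lahNum n (k+1) := by
  cases n with
  | zero =>
    cases k with
    | zero => decide
    | succ j => simp [lahNum_succ_succ, lahNum, Nat.choose]
  | succ m =>
    cases k with
    | zero =>
      show lahNum (m+2) 1 = lahNum (m+1) 0 + (m+2) * lahNum (m+1) 1
      have h1 : lahNum (m+2) 1 = (m+2).factorial := by
        rw [show (m+2) = (m+1)+1 from rfl, show (1:ℕ) = 0+1 from rfl, lahNum_succ_succ]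
        simp [Nat.factorial]
      have h2 : lahNum (m+1) 1 = (m+1).factorial := by
        rw [show (1:ℕ) = 0+1 from rfl, lahNum_succ_succ]
        simp [Nat.factorial]
      rw [h1, h2, show lahNum (m+1) 0 = 0 from rfl, Nat.zero_add, Nat.factorial_succ (m+1)]
    | succ k =>
      apply Nat.eq_of_mul_eq_mul_left (Nat.factorial_pos (k+2))
      rw [lah_clear (m+1) (k+1), Nat.mul_add]
      have h1 : (k+2).factorial * lahNum (m+1) (k+1) = (k+2) * ((m+1).factorial * Nat.choose m k) := by
        rw [show (k+2).factorial = (k+2) * (k+1).factorial from rfl, Nat.mul_assoc, lah_clear]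
      have h2 : (k+2).factorial * ((m+1+(k+1)+1) * lahNum (m+1) (k+1+1)) = (m+k+3) * ((m+1).factorial * Nat.choose m (k+1)) := by
        rw [Nat.mul_left_comm, lah_clear m (k+1)]
        congr 1
        omega
      rw [h1, h2]
      -- (m+2)! * C(m+1,k+1) = (k+2)*((m+1)!*C(m,k)) + (m+k+3)*((m+1)!*C(m,k+1))
      rcases le_or_gt k m with hk | hk
      · have hsub : (k+1) * Nat.choose m (k+1) = (m-k) * Nat.choose m k := by
          rw [Nat.mul_comm, Nat.choose_succ_right_eq, Nat.mul_comm]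
        have hpas : Nat.choose (m+1) (k+1) = Nat.choose m k + Nat.choose m (k+1) :=
          Nat.choose_succ_succ m k
        have hfac : (m+1+1).factorial = (m+2) * (m+1).factorial := by
          rw [Nat.factorial_succ]
        zify [hk] at hsub ⊢
        rw [hpas, hfac]
        push_cast
        linear_combination (-((m+1).factorial : ℤ)) * hsub
      · rw [Nat.choose_eq_zero_of_lt (by omega), Nat.choose_eq_zero_of_lt (by omega),
          Nat.choose_eq_zero_of_lt (by omega)]
        simp

lemma hockey (p : ℕ) : ∀ m : ℕ, ∑ i ∈ range m, (i.choose p) = m.choose (p+1) := by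
  intro m
  induction m with
  | zero => simp
  | succ m ih => rw [Finset.sum_range_succ, ih, Nat.choose_succ_succ m p, Nat.add_comm]

lemma vand (p : ℕ) : ∀ (m q : ℕ), ∑ i ∈ range m, (i.choose p) * ((m - 1 - i).choose q) = m.choose (p+q+1) := by
  intro m
  induction m with
  | zero => simp
  | succ m ih =>
    intro q
    cases q with
    | zero => simpa using hockey p (m+1)
    | succ q =>
      rw [Finset.sum_range_succ]
      have htop : (m + 1 - 1 - m).choose (q+1) = 0 := by
        simp [Nat.choose_eq_zero_of_lt]
      rw [htop, Nat.mul_zero, Nat.add_zero]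
      have hstep : ∀ i ∈ range m, (i.choose p) * ((m + 1 - 1 - i).choose (q+1))
          = (i.choose p) * ((m - 1 - i).choose q) + (i.choose p) * ((m - 1 - i).choose (q+1)) := by
        intro i hi
        have hi' : i < m := Finset.mem_range.mp hi
        have : m + 1 - 1 - i = (m - 1 - i) + 1 := by omega
        rw [this, Nat.choose_succ_succ, Nat.mul_add]
      rw [Finset.sum_congr rfl hstep, Finset.sum_add_distrib, ih q, ih (q+1)]
      exact (Nat.choose_succ_succ m (p+q+1)).symm

lemma nid (n r j : ℕ) :
    r.factorial * (j.factorial * ∑ k ∈ range (n+1), n.choose k * (lahNum k r * lahNum (n-k) j))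
      = j.factorial * ((j+r).descFactorial r * lahNum n (j+r)) := by
  cases r with
  | zero =>
    rw [Finset.sum_eq_single_of_mem 0 (Finset.mem_range.mpr (by omega))]
    · simp [lahNum]
    · rintro (_ | b) _ hb
      · exact absurd rfl hb
      · rw [show lahNum (b+1) 0 = 0 from rfl]
        simp
  | succ r =>
    cases j with
    | zero =>
      rw [Finset.sum_eq_single_of_mem n (Finset.mem_range.mpr (by omega))]
      · simp only [Nat.sub_self, Nat.choose_self, Nat.zero_add, Nat.descFactorial_self,
          show lahNum 0 0 = 1 from rfl, Nat.factorial_zero]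
        ring
      · intro b hb hbn
        have : n - b = (n - b - 1) + 1 := by
          have := Finset.mem_range.mp hb; omega
        rw [this, show lahNum ((n-b-1)+1) 0 = 0 from rfl]
        simp
    | succ j =>
      cases n with
      | zero =>
        simp [lahNum_eq_zero (show 0 < j + 1 + (r+1) by omega), lahNum]
      | succ n =>
        rw [Finset.sum_range_succ, Nat.sub_self,
          show lahNum 0 (j+1) = 0 from rfl, Nat.mul_zero, Nat.mul_zero, Nat.add_zero,
          Finset.sum_range_succ', show lahNum 0 (r+1) = 0 from rfl]
        simp only [Nat.zero_mul, Nat.mul_zero, Nat.add_zero]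
        have hterm : ∀ i ∈ range n,
            (r+1).factorial * ((j+1).factorial *
              ((n+1).choose (i+1) * (lahNum (i+1) (r+1) * lahNum (n+1-(i+1)) (j+1))))
            = (n+1).factorial * ((i.choose r) * ((n-1-i).choose j)) := by
          intro i hi
          have hi' : i < n := Finset.mem_range.mp hi
          have hni : n + 1 - (i+1) = n - i := by omega
          rw [hni]
          have e1 : (r+1).factorial * lahNum (i+1) (r+1) = (i+1).factorial * i.choose r :=
            lah_clear i r
          have e2 : (j+1).factorial * lahNum (n-i) (j+1) = (n-i).factorial * (n-i-1).choose j := by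
            have := lah_clear (n-i-1) j
            rwa [show n - i - 1 + 1 = n - i by omega] at this
          have e3 : (n+1).choose (i+1) * ((i+1).factorial * (n-i).factorial) = (n+1).factorial := by
            have := Nat.choose_mul_factorial_mul_factorial (show i+1 ≤ n+1 by omega)
            rwa [show n + 1 - (i+1) = n - i by omega, Nat.mul_assoc] at this
          calc (r+1).factorial * ((j+1).factorial *
              ((n+1).choose (i+1) * (lahNum (i+1) (r+1) * lahNum (n-i) (j+1))))
              = ((n+1).choose (i+1) * (((r+1).factorial * lahNum (i+1) (r+1)) *
                  ((j+1).factorial * lahNum (n-i) (j+1)))) := by ring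
            _ = ((n+1).choose (i+1) * (((i+1).factorial * i.choose r) *
                  ((n-i).factorial * (n-i-1).choose j))) := by rw [e1, e2]
            _ = ((n+1).choose (i+1) * ((i+1).factorial * (n-i).factorial)) *
                  (i.choose r * (n-i-1).choose j) := by ring
            _ = (n+1).factorial * ((i.choose r) * ((n-1-i).choose j)) := by
                rw [e3, show n - i - 1 = n - 1 - i by omega]
        rw [Finset.mul_sum, Finset.mul_sum, Finset.sum_congr rfl hterm, ← Finset.mul_sum,
          vand r n j]
        -- RHS: (j+1)! * ((j+1+(r+1)).descFactorial (r+1) * lahNum (n+1) (j+1+(r+1)))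
        have hd : (j+1+(r+1)).descFactorial (r+1) = (r+1).factorial * (j+1+(r+1)).choose (r+1) :=
          Nat.descFactorial_eq_factorial_mul_choose _ _
        have hc : (j+1).factorial * ((r+1).factorial * (j+1+(r+1)).choose (r+1)) = (j+r+2).factorial := by
          have := Nat.choose_mul_factorial_mul_factorial (show r+1 ≤ j+1+(r+1) by omega)
          rw [show j+1+(r+1) - (r+1) = j+1 by omega] at this
          calc (j+1).factorial * ((r+1).factorial * (j+1+(r+1)).choose (r+1))
              = (j+1+(r+1)).choose (r+1) * (r+1).factorial * (j+1).factorial := by ring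
            _ = (j+1+(r+1)).factorial := this
            _ = (j+r+2).factorial := by congr 1; omega
        have hl : (j+r+2).factorial * lahNum (n+1) (j+r+2) = (n+1).factorial * n.choose (j+r+1) := by
          have := lah_clear n (j+r+1)
          rwa [show j+r+1+1 = j+r+2 by omega] at this
        calc (n+1).factorial * n.choose (r+j+1)
            = (j+r+2).factorial * lahNum (n+1) (j+r+2) := by
              rw [hl]; congr 2; omega
          _ = (j+1).factorial * ((r+1).factorial * (j+1+(r+1)).choose (r+1)) * lahNum (n+1) (j+r+2) := by rw [hc]
          _ = (j+1).factorial * ((j+1+(r+1)).descFactorial (r+1) * lahNum (n+1) (j+1+(r+1))) := by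
              rw [hd, show j+1+(r+1) = j+r+2 by omega]; ring

end NatLemmas
section PolyLemmas

lemma lahPoly_coeff (m j : ℕ) : (lahPoly m).coeff j = (lahNum m j : ℝ) := by
  rw [lahPoly, Polynomial.finset_sum_coeff]
  simp only [Polynomial.coeff_C_mul, Polynomial.coeff_X_pow, mul_ite, mul_one, mul_zero]
  rw [Finset.sum_ite_eq (Finset.range (m+1)) j fun i => (lahNum m i : ℝ)]
  split
  · rfl
  · rename_i h
    rw [lahNum_eq_zero (show m < j by simp only [Finset.mem_range] at h; omega), Nat.cast_zero]

lemma gPoly_eq_range (n r : ℕ) :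
    gPoly n r = ∑ k ∈ Finset.range (n+1),
      Polynomial.C ((n.choose k : ℝ) * (lahNum k r : ℝ)) * lahPoly (n - k) := by
  rw [gPoly]
  apply Finset.sum_subset
  · intro x hx
    simp only [Finset.mem_Icc, Finset.mem_range] at hx ⊢
    omega
  · intro x hx hx'
    simp only [Finset.mem_Icc, Finset.mem_range] at hx hx'
    rw [lahNum_eq_zero (by omega)]
    simp

lemma gPoly_coeff (n r j : ℕ) :
    (gPoly n r).coeff j
      = ∑ k ∈ Finset.range (n+1), (n.choose k : ℝ) * ((lahNum k r : ℝ) * (lahNum (n-k) j : ℝ)) := by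
  rw [gPoly_eq_range, Polynomial.finset_sum_coeff]
  refine Finset.sum_congr rfl fun k _ => ?_
  rw [Polynomial.coeff_C_mul, lahPoly_coeff, mul_assoc]

lemma gPoly_eq_deriv (n r : ℕ) :
    gPoly n r = Polynomial.C ((r.factorial : ℝ))⁻¹ * Polynomial.derivative^[r] (lahPoly n) := by
  apply Polynomial.ext
  intro j
  rw [Polynomial.coeff_C_mul, Polynomial.coeff_iterate_derivative, gPoly_coeff]
  have h := congrArg (fun t : ℕ => (t : ℝ)) (nid n r j)
  push_cast at h
  have hr : ((r.factorial : ℕ) : ℝ) ≠ 0 := Nat.cast_ne_zero.mpr r.factorial_ne_zero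
  have hj : ((j.factorial : ℕ) : ℝ) ≠ 0 := Nat.cast_ne_zero.mpr j.factorial_ne_zero
  rw [lahPoly_coeff, nsmul_eq_mul]
  have h' : ((j.factorial : ℕ) : ℝ) * ((r.factorial : ℝ) *
      ∑ k ∈ Finset.range (n+1), (n.choose k : ℝ) * ((lahNum k r : ℝ) * (lahNum (n-k) j : ℝ)))
      = ((j.factorial : ℕ) : ℝ) * (((j+r).descFactorial r : ℝ) * (lahNum n (j+r) : ℝ)) := by
    linear_combination h
  have hcan := mul_left_cancel₀ hj h'
  rw [← hcan, inv_mul_cancel_left₀ hr]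

lemma lahPoly_succ (n : ℕ) :
    lahPoly (n+1) = Polynomial.X * Polynomial.derivative (lahPoly n)
      + (Polynomial.X + Polynomial.C (n:ℝ)) * lahPoly n := by
  apply Polynomial.ext
  intro j
  have hco : ∀ m i, (lahPoly m).coeff i = (lahNum m i : ℝ) := lahPoly_coeff
  cases j with
  | zero =>
    simp only [Polynomial.coeff_add, Polynomial.mul_coeff_zero, Polynomial.coeff_X_zero,
      Polynomial.coeff_C_zero, zero_mul, zero_add, lahPoly_coeff,
      show lahNum (n+1) 0 = 0 from rfl, Nat.cast_zero]
    cases n with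
    | zero => norm_num
    | succ m => rw [show lahNum (m+1) 0 = 0 from rfl]; norm_num
  | succ k =>
    rw [Polynomial.coeff_add, Polynomial.coeff_X_mul, Polynomial.coeff_derivative,
      add_mul, Polynomial.coeff_add, Polynomial.coeff_X_mul, Polynomial.coeff_C_mul]
    simp only [lahPoly_coeff]
    have := congrArg (fun t : ℕ => (t : ℝ)) (lah_rec n k)
    push_cast at this ⊢
    linear_combination this

lemma lahPoly_natDegree (n : ℕ) : (lahPoly n).natDegree = n := by
  apply le_antisymm
  · rw [Polynomial.natDegree_le_iff_coeff_eq_zero]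
    intro m hm
    rw [lahPoly_coeff, lahNum_eq_zero hm, Nat.cast_zero]
  · apply Polynomial.le_natDegree_of_ne_zero
    rw [lahPoly_coeff, lahNum_self]
    norm_num

lemma iter_deriv_natDegree (n k : ℕ) (h : k ≤ n) :
    (Polynomial.derivative^[k] (lahPoly n)).natDegree = n - k := by
  apply le_antisymm
  · have := Polynomial.natDegree_iterate_derivative (lahPoly n) k
    rwa [lahPoly_natDegree] at this
  · apply Polynomial.le_natDegree_of_ne_zero
    rw [Polynomial.coeff_iterate_derivative, Nat.sub_add_cancel h, lahPoly_coeff, lahNum_self,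
      nsmul_eq_mul, Nat.cast_one, mul_one]
    intro hcon
    rw [Nat.cast_eq_zero, Nat.descFactorial_eq_zero_iff_lt] at hcon
    omega

end PolyLemmas
section ComplexLemmas

open Complex

lemma deriv_eval_list (z : ℂ) :
    ∀ l : List ℂ, (∀ r ∈ l, z ≠ r) →
      Polynomial.eval z (Polynomial.derivative (l.map fun r => Polynomial.X - Polynomial.C r).prod)
        = ((l.map fun r => (z - r)⁻¹).sum) *
            Polynomial.eval z ((l.map fun r => Polynomial.X - Polynomial.C r).prod)
  | [], _ => by simp
  | a :: l, h => by
    have ha : z - a ≠ 0 := sub_ne_zero.mpr (h a (List.mem_cons_self))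
    have ih := deriv_eval_list z l (fun r hr => h r (List.mem_cons_of_mem a hr))
    simp only [List.map_cons, List.prod_cons, Polynomial.derivative_mul,
      Polynomial.derivative_sub, Polynomial.derivative_X, Polynomial.derivative_C, sub_zero,
      Polynomial.eval_add, Polynomial.eval_mul, Polynomial.eval_sub, Polynomial.eval_X,
      Polynomial.eval_C, Polynomial.eval_one, one_mul, List.sum_cons]
    rw [ih]
    field_simp

lemma eval_derivative_eq (q : Polynomial ℂ) (z : ℂ) (hz : Polynomial.eval z q ≠ 0) :
    Polynomial.eval z (Polynomial.derivative q)
      = ((q.roots.toList.map fun r => (z - r)⁻¹).sum) * Polynomial.eval z q := by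
  have hcard : Multiset.card q.roots = q.natDegree :=
    (Polynomial.splits_iff_card_roots).mp (IsAlgClosed.splits q)
  have hrep := Polynomial.C_leadingCoeff_mul_prod_multiset_X_sub_C hcard
  have hml : (q.roots.map fun a => Polynomial.X - Polynomial.C a).prod
      = (q.roots.toList.map fun r => Polynomial.X - Polynomial.C r).prod := by
    conv_lhs => rw [← Multiset.coe_toList q.roots]
    rw [Multiset.map_coe, Multiset.prod_coe]
  have hzr : ∀ r ∈ q.roots.toList, z ≠ r := by
    intro r hr hzr'
    apply hz
    rw [hzr']
    exact Polynomial.isRoot_of_mem_roots (Multiset.mem_toList.mp hr)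
  have hq' : Polynomial.derivative q
      = Polynomial.C q.leadingCoeff *
          Polynomial.derivative (q.roots.toList.map fun r => Polynomial.X - Polynomial.C r).prod := by
    conv_lhs => rw [← hrep, hml]
    rw [Polynomial.derivative_C_mul]
  have heq : Polynomial.eval z q
      = q.leadingCoeff * Polynomial.eval z (q.roots.toList.map fun r => Polynomial.X - Polynomial.C r).prod := by
    conv_lhs => rw [← hrep, hml]
    rw [Polynomial.eval_mul, Polynomial.eval_C]
  rw [hq', Polynomial.eval_mul, Polynomial.eval_C, deriv_eval_list z _ hzr, heq]
  ring

lemma list_sum_inv_im (z : ℂ) :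
    ∀ l : List ℂ, (∀ r ∈ l, r.im = 0) →
      ((l.map fun r => (z - r)⁻¹).sum).im
        = -z.im * ((l.map fun r => (Complex.normSq (z - r))⁻¹).sum)
  | [], _ => by simp
  | a :: l, h => by
    have ih := list_sum_inv_im z l (fun r hr => h r (List.mem_cons_of_mem a hr))
    simp only [List.map_cons, List.sum_cons, Complex.add_im, ih, Complex.inv_im,
      Complex.sub_im, h a (List.mem_cons_self), sub_zero]
    rw [div_eq_mul_inv]
    ring

lemma list_sum_inv_normSq_nonneg (z : ℂ) :
    ∀ l : List ℂ, 0 ≤ ((l.map fun r => (Complex.normSq (z - r))⁻¹).sum)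
  | [] => le_refl 0
  | a :: l => by
    simp only [List.map_cons, List.sum_cons]
    have := list_sum_inv_normSq_nonneg z l
    have h2 : 0 ≤ (Complex.normSq (z - a))⁻¹ := inv_nonneg.mpr (Complex.normSq_nonneg _)
    linarith

lemma lahPoly_one : lahPoly 1 = Polynomial.X := by
  rw [show (1:ℕ) = 0 + 1 from rfl, lahPoly_succ]
  have h0 : lahPoly 0 = 1 := by
    apply Polynomial.ext
    intro j
    rw [lahPoly_coeff]
    cases j with
    | zero => simp [lahNum]
    | succ k => rw [lahNum_eq_zero (by omega)]; simp [Polynomial.coeff_one]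
  rw [h0]
  simp

lemma RZ_lahPoly : ∀ n, RZ (lahPoly n) := by
  intro n
  induction n with
  | zero =>
    intro z hz
    exfalso
    have h0 : lahPoly 0 = 1 := by
      apply Polynomial.ext
      intro j
      rw [lahPoly_coeff]
      cases j with
      | zero => simp [lahNum]
      | succ k => rw [lahNum_eq_zero (by omega)]; simp [Polynomial.coeff_one]
    rw [h0, Polynomial.map_one, Polynomial.IsRoot, Polynomial.eval_one] at hz
    exact one_ne_zero hz
  | succ n ih =>
    cases n with
    | zero =>
      intro z hz
      rw [lahPoly_one, Polynomial.map_X, Polynomial.IsRoot, Polynomial.eval_X] at hz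
      rw [hz]
      rfl
    | succ m =>
      intro z hz
      set q := (lahPoly (m+1)).map (algebraMap ℝ ℂ) with hqdef
      have hmap : (lahPoly (m+2)).map (algebraMap ℝ ℂ)
          = Polynomial.X * Polynomial.derivative q
            + (Polynomial.X + Polynomial.C ((m:ℂ)+1)) * q := by
        rw [show m + 2 = (m+1)+1 from rfl, lahPoly_succ]
        rw [Polynomial.map_add, Polynomial.map_mul, Polynomial.map_mul, Polynomial.map_add,
          Polynomial.map_X, Polynomial.map_C, Polynomial.derivative_map]
        norm_num
        left; exact hqdef.symm
      rw [Polynomial.IsRoot, hmap, Polynomial.eval_add, Polynomial.eval_mul,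
        Polynomial.eval_mul, Polynomial.eval_add, Polynomial.eval_X, Polynomial.eval_C] at hz
      by_cases hq : Polynomial.eval z q = 0
      · exact ih z hq
      by_cases hz0 : z = 0
      · rw [hz0]; rfl
      have hd := eval_derivative_eq q z hq
      rw [hd] at hz
      set S := ((q.roots.toList.map fun r => (z - r)⁻¹).sum) with hSdef
      have h2 : z * S + (z + ((m:ℂ)+1)) = 0 := by
        have hfac : (z * S + (z + ((m:ℂ)+1))) * Polynomial.eval z q = 0 := by
          linear_combination hz
        rcases mul_eq_zero.mp hfac with h | h
        · exact h
        · exact absurd h hq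
      have hzinv : z * z⁻¹ = 1 := mul_inv_cancel₀ hz0
      have h3 : S + 1 + ((m:ℂ)+1) * z⁻¹ = 0 := by
        linear_combination z⁻¹ * h2 - (S + 1) * hzinv
      have him : ∀ r ∈ q.roots.toList, r.im = 0 := fun r hr =>
        ih r (Polynomial.isRoot_of_mem_roots (Multiset.mem_toList.mp hr))
      have him3 := congrArg Complex.im h3
      rw [Complex.add_im, Complex.add_im, list_sum_inv_im z _ him, Complex.one_im,
        Complex.mul_im, Complex.zero_im] at him3
      have hre : ((m:ℂ)+1).im = 0 := by simp
      have hre2 : ((m:ℂ)+1).re = (m:ℝ)+1 := by simp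
      rw [hre, hre2, Complex.inv_im, zero_mul, add_zero, add_zero] at him3
      -- him3 : -z.im * A + ((m:ℝ)+1) * (-z.im / normSq z) = 0
      have hA := list_sum_inv_normSq_nonneg z q.roots.toList
      set A := ((q.roots.toList.map fun r => (Complex.normSq (z - r))⁻¹).sum)
      have hnsq : 0 < Complex.normSq z := Complex.normSq_pos.mpr hz0
      by_contra hy
      have hy2 : z.im ≠ 0 := hy
      rcases lt_or_gt_of_ne hy2 with hlt | hgt
      · have t1 : 0 ≤ -z.im * A := mul_nonneg (by linarith) hA
        have t2 : 0 < ((m:ℝ)+1) * (-z.im / Complex.normSq z) :=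
          mul_pos (by positivity) (div_pos (by linarith) hnsq)
        linarith
      · have t1 : -z.im * A ≤ 0 := by nlinarith [mul_nonneg (le_of_lt hgt) hA]
        have t2 : ((m:ℝ)+1) * (-z.im / Complex.normSq z) < 0 :=
          mul_neg_of_pos_of_neg (by positivity) (div_neg_of_neg_of_pos (by linarith) hnsq)
        linarith

end ComplexLemmas
section Part1

lemma RZ_derivative (p : Polynomial ℝ) (hp : RZ p) (hdeg : p.natDegree ≠ 0) :
    RZ (Polynomial.derivative p) := by
  intro z hz
  set q := p.map (algebraMap ℝ ℂ) with hqdef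
  have hmapd : (Polynomial.derivative p).map (algebraMap ℝ ℂ) = Polynomial.derivative q :=
    (Polynomial.derivative_map p (algebraMap ℝ ℂ)).symm
  rw [Polynomial.IsRoot, hmapd] at hz
  by_cases hqz : Polynomial.eval z q = 0
  · exact hp z hqz
  have hd := eval_derivative_eq q z hqz
  rw [hz] at hd
  have hS : ((q.roots.toList.map fun r => (z - r)⁻¹).sum) = 0 := by
    rcases mul_eq_zero.mp hd.symm with h | h
    · exact h
    · exact absurd h hqz
  have him : ∀ r ∈ q.roots.toList, r.im = 0 := fun r hr =>
    hp r (Polynomial.isRoot_of_mem_roots (Multiset.mem_toList.mp hr))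
  have hSim := congrArg Complex.im hS
  rw [list_sum_inv_im z _ him, Complex.zero_im] at hSim
  -- roots nonempty
  have hp0 : p ≠ 0 := by
    intro hcon
    rw [hcon, Polynomial.natDegree_zero] at hdeg
    exact hdeg rfl
  have hq0 : q ≠ 0 := by
    simpa [hqdef] using (Polynomial.map_ne_zero_iff
      (algebraMap ℝ ℂ).injective).mpr hp0
  have hcard : Multiset.card q.roots = q.natDegree :=
    (Polynomial.splits_iff_card_roots).mp (IsAlgClosed.splits q)
  have hqdeg : q.natDegree ≠ 0 := by
    rwa [hqdef, Polynomial.natDegree_map_eq_of_injective (algebraMap ℝ ℂ).injective]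
  have hne : q.roots.toList ≠ [] := by
    intro hcon
    have : Multiset.card q.roots = 0 := by
      rw [← Multiset.coe_toList q.roots, hcon]
      rfl
    omega
  -- positivity of A
  obtain ⟨a, l', hl'⟩ := List.exists_cons_of_ne_nil hne
  by_contra hy
  have hyne : z.im ≠ 0 := hy
  have hzr : ∀ r ∈ q.roots.toList, z - r ≠ 0 := by
    intro r hr hc
    apply hqz
    have : z = r := by linear_combination hc
    rw [this]
    exact Polynomial.isRoot_of_mem_roots (Multiset.mem_toList.mp hr)
  have hApos : 0 < ((q.roots.toList.map fun r => (Complex.normSq (z - r))⁻¹).sum) := by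
    rw [hl']
    simp only [List.map_cons, List.sum_cons]
    have h1 : 0 < (Complex.normSq (z - a))⁻¹ := by
      apply inv_pos.mpr
      apply Complex.normSq_pos.mpr
      exact hzr a (by rw [hl']; exact List.mem_cons_self)
    have h2 := list_sum_inv_normSq_nonneg z l'
    linarith
  rcases lt_or_gt_of_ne hyne with hlt | hgt
  · nlinarith
  · nlinarith

lemma RZ_C_mul (c : ℝ) (hc : c ≠ 0) (p : Polynomial ℝ) (h : RZ p) :
    RZ (Polynomial.C c * p) := by
  intro z hz
  apply h z
  rw [Polynomial.map_mul, Polynomial.map_C, Polynomial.IsRoot, Polynomial.eval_mul,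
    Polynomial.eval_C] at hz
  have hc' : (algebraMap ℝ ℂ) c ≠ 0 := by
    simpa using hc
  exact (mul_eq_zero.mp hz).resolve_left hc'

lemma RZ_iter (n : ℕ) : ∀ r, r ≤ n → RZ (Polynomial.derivative^[r] (lahPoly n)) := by
  intro r
  induction r with
  | zero => intro _; simpa using RZ_lahPoly n
  | succ k ih =>
    intro h
    rw [Function.iterate_succ_apply']
    apply RZ_derivative _ (ih (by omega))
    rw [iter_deriv_natDegree n k (by omega)]
    omega

lemma part1 : ∀ n r : ℕ, r ≤ n → RZ (gPoly n r) := by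
  intro n r h
  rw [gPoly_eq_deriv]
  exact RZ_C_mul _ (inv_ne_zero (Nat.cast_ne_zero.mpr r.factorial_ne_zero)) _ (RZ_iter n r h)

end Part1
section Part2

lemma coeff_T (k : ℕ) :
    PowerSeries.coeff k tDivOneSubT = if k = 0 then 0 else 1 := by
  rw [tDivOneSubT, PowerSeries.coeff_mk]

lemma coeff_T_pow (r : ℕ) : ∀ k, PowerSeries.coeff k (tDivOneSubT ^ (r+1))
    = if k = 0 then 0 else ((k-1).choose r : ℝ) := by
  induction r with
  | zero =>
    intro k
    rw [pow_one, coeff_T]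
    split
    · rfl
    · simp [Nat.choose_zero_right]
  | succ r ih =>
    intro k
    rw [pow_succ, PowerSeries.coeff_mul, Finset.Nat.sum_antidiagonal_eq_sum_range_succ_mk]
    simp only [ih, coeff_T]
    cases k with
    | zero => simp
    | succ k' =>
      rw [Finset.sum_range_succ]
      have h1 : ∀ i ∈ Finset.range (k'+1),
          (if i = 0 then (0:ℝ) else ((i-1).choose r : ℝ)) * (if k'+1 - i = 0 then 0 else 1)
            = (if i = 0 then (0:ℝ) else ((i-1).choose r : ℝ)) := by
        intro i hi
        rw [if_neg (show ¬(k'+1 - i = 0) by have := Finset.mem_range.mp hi; omega), mul_one]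
      rw [Finset.sum_congr rfl h1, Nat.sub_self, if_pos rfl, mul_zero, add_zero,
        Finset.sum_range_succ']
      simp only [Nat.succ_ne_zero, if_false, if_pos rfl, Nat.add_sub_cancel, add_zero]
      exact_mod_cast congrArg (fun t : ℕ => (t:ℝ)) (hockey r k')

lemma gPoly_zero (n : ℕ) : gPoly n 0 = lahPoly n := by
  rw [gPoly, Finset.sum_eq_single_of_mem 0 (Finset.mem_Icc.mpr ⟨le_refl 0, Nat.zero_le n⟩)]
  · simp [lahNum]
  · intro b _ hb0
    obtain ⟨b', rfl⟩ : ∃ b'', b = b''+1 := ⟨b-1, by omega⟩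
    rw [show lahNum (b'+1) 0 = 0 from rfl]
    simp

lemma part2 : ∀ (r : ℕ) (x : ℝ),
    (PowerSeries.mk fun n => (gPoly n r).eval x / (n.factorial : ℝ))
      = PowerSeries.C (R := ℝ) (1 / (r.factorial : ℝ)) * tDivOneSubT ^ r *
          PowerSeries.mk (fun m => (lahPoly m).eval x / (m.factorial : ℝ)) := by
  intro r x
  cases r with
  | zero =>
    apply PowerSeries.ext
    intro n
    simp [gPoly_zero, PowerSeries.coeff_mk]
  | succ r =>
    apply PowerSeries.ext
    intro n
    rw [PowerSeries.coeff_mk, mul_assoc, PowerSeries.coeff_C_mul, PowerSeries.coeff_mul,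
      Finset.Nat.sum_antidiagonal_eq_sum_range_succ_mk, Finset.mul_sum]
    rw [gPoly_eq_range, Polynomial.eval_finset_sum, Finset.sum_div]
    apply Finset.sum_congr rfl
    intro k hk
    have hk' : k ≤ n := by have := Finset.mem_range.mp hk; omega
    rw [Polynomial.eval_mul, Polynomial.eval_C, coeff_T_pow r k, PowerSeries.coeff_mk]
    cases k with
    | zero => rw [show lahNum 0 (r+1) = 0 from rfl]; simp
    | succ k'' =>
      rw [if_neg (Nat.succ_ne_zero _), Nat.add_sub_cancel]
      have hnat : (r+1).factorial * ((n - (k''+1)).factorial *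
            ((n.choose (k''+1)) * lahNum (k''+1) (r+1)))
          = n.factorial * (k''.choose r) := by
        have e1 : (r+1).factorial * lahNum (k''+1) (r+1) = (k''+1).factorial * (k''.choose r) :=
          lah_clear k'' r
        calc (r+1).factorial * ((n - (k''+1)).factorial *
              ((n.choose (k''+1)) * lahNum (k''+1) (r+1)))
            = (n.choose (k''+1)) * ((n-(k''+1)).factorial) *
                ((r+1).factorial * lahNum (k''+1) (r+1)) := by ring
          _ = (n.choose (k''+1)) * ((n-(k''+1)).factorial) *
                ((k''+1).factorial * (k''.choose r)) := by rw [e1]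
          _ = ((n.choose (k''+1)) * (k''+1).factorial * (n-(k''+1)).factorial) *
                (k''.choose r) := by ring
          _ = n.factorial * (k''.choose r) := by
              rw [Nat.choose_mul_factorial_mul_factorial hk']
      have h := congrArg (fun t : ℕ => (t:ℝ)) hnat
      push_cast at h
      have hn : ((n.factorial : ℕ):ℝ) ≠ 0 := Nat.cast_ne_zero.mpr n.factorial_ne_zero
      have hnk : (((n - (k''+1)).factorial : ℕ):ℝ) ≠ 0 :=
        Nat.cast_ne_zero.mpr (Nat.factorial_ne_zero _)
      have hr : (((r+1).factorial : ℕ):ℝ) ≠ 0 :=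
        Nat.cast_ne_zero.mpr (Nat.factorial_ne_zero _)
      field_simp
      linear_combination (Polynomial.eval x (lahPoly (n - (k''+1)))) * h

end Part2

/-- For `r ≤ n` the polynomial `g_n^{(r)}` has only real zeros, and moreover its
exponential generating function is `(1/r!) (t/(1−t))^r exp(x t/(1−t))`, where
`exp(x t/(1−t)) = ∑_m L_m(x) t^m/m!`. -/
theorem gPoly_lah_real_rooted_and_egf :
    (∀ n r : ℕ, r ≤ n → RZ (gPoly n r)) ∧
      ∀ (r : ℕ) (x : ℝ),
        (PowerSeries.mk fun n => (gPoly n r).eval x / (n.factorial : ℝ))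
          = PowerSeries.C (R := ℝ) (1 / (r.factorial : ℝ)) * tDivOneSubT ^ r *
            PowerSeries.mk (fun m => (lahPoly m).eval x / (m.factorial : ℝ)) := by
  exact ⟨part1, part2⟩
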